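/- There exists a weakly quasiminimal pregeometry structure 𝔐 in the language of a single equivalence relation, with ℵ₀ equivalence classes each of size ℵ₀ and cl(A) defined as the union of the equivalence classes meeting A, together with an infinite non-closed subset M ⊆ 𝔐 and finite tuples ā, b̄ ∈ 𝔐 with b̄ ∈ cl(M ā), such that tp(b̄/M ∪ ā) is not s-isolated. -/

import Mathlib

open FirstOrder Set

namespace QM

/-- Equality of quantifier-free types of two assignments (possibly in different structures). -/
def EqQF (L : FirstOrder.Language) {M N : Type*} [L.Structure M] [L.Structure N]
    {α : Type*} (a : α → M) (b : α → N) : Prop :=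
  ∀ φ : L.Formula α, φ.IsQF → (φ.Realize a ↔ φ.Realize b)

/-- Equality of quantifier-free types over a parameter set `B`. -/
def EqQFOver (L : FirstOrder.Language) {M : Type*} [L.Structure M] (B : Set M) {n : ℕ}
    (a b : Fin n → M) : Prop :=
  ∀ (m : ℕ) (c : Fin m → M), (∀ i, c i ∈ B) →
    EqQF L (Sum.elim a c) (Sum.elim b c)

/-- A pregeometry (combinatorial closure with exchange). -/
structure Pregeom (M : Type*) where
  cl : Set M → Set M
  subset_cl : ∀ A, A ⊆ cl A
  mono : ∀ ⦃A B : Set M⦄, A ⊆ B → cl A ⊆ cl B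
  cl_idem : ∀ A, cl (cl A) = cl A
  finChar : ∀ (A : Set M) (x : M), x ∈ cl A → ∃ F : Finset M, ↑F ⊆ A ∧ x ∈ cl ↑F
  exchange : ∀ (A : Set M) (a b : M), a ∈ cl (insert b A) → a ∉ cl A → b ∈ cl (insert a A)

variable (L : FirstOrder.Language) (M : Type*) [L.Structure M] (P : Pregeom M)

def Indep (P : Pregeom M) (S : Set M) : Prop := ∀ x ∈ S, x ∉ P.cl (S \ {x})

/-- QM1: the pregeometry is determined by the language. -/
def QM1 : Prop :=
  ∀ (n : ℕ) (a a' : M) (b b' : Fin n → M),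
    EqQF L (Fin.cons a b) (Fin.cons a' b') →
    (a ∈ P.cl (Set.range b) ↔ a' ∈ P.cl (Set.range b'))

/-- QM2: infinite-dimensionality. -/
def QM2 : Prop := ∀ F : Finset M, P.cl ↑F ≠ Set.univ

/-- QM3: countable closure property. -/
def QM3 : Prop := ∀ F : Finset M, (P.cl ↑F).Countable

/-- QM4: uniqueness of the generic type. -/
def QM4 : Prop :=
  ∀ (ι : Type) [Countable ι] (h h' : ι → M),
    P.cl (Set.range h) = Set.range h → P.cl (Set.range h') = Set.range h' →
    EqQF L h h' →
    ∀ a a' : M, a ∉ Set.range h → a' ∉ Set.range h' →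
      EqQF L (Sum.elim h fun _ : Unit => a) (Sum.elim h' fun _ : Unit => a')

/-- QM5: ℵ₀-homogeneity over countable closed sets and the empty set. -/
def QM5 : Prop :=
  ∀ (ι : Type) [Countable ι] (h h' : ι → M) (n : ℕ) (b b' : Fin n → M),
    (P.cl (Set.range h) = Set.range h ∨ Set.range h = ∅) →
    (P.cl (Set.range h') = Set.range h' ∨ Set.range h' = ∅) →
    EqQF L (Sum.elim h b) (Sum.elim h' b') →
    ∀ a ∈ P.cl (Set.range h ∪ Set.range b),
      ∃ a' : M, EqQF L (Sum.elim (Sum.elim h b) fun _ : Unit => a)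
        (Sum.elim (Sum.elim h' b') fun _ : Unit => a')

/-- A weakly quasiminimal pregeometry structure: QM1, QM3, QM4, QM5. -/
structure IsWQPS : Prop where
  qm1 : QM1 L M P
  qm3 : QM3 M P
  qm4 : QM4 L M P
  qm5 : QM5 L M P

/-- A quasiminimal pregeometry structure: additionally QM2. -/
structure IsQPS extends IsWQPS L M P : Prop where
  qm2 : QM2 M P

/-- ℵ₀-homogeneity over the empty set. -/
def HomogEmpty : Prop :=
  ∀ (n m : ℕ) (b b' : Fin n → M), EqQF L b b' →
    ∀ a : Fin m → M, ∃ a' : Fin m → M, EqQF L (Sum.elim a b) (Sum.elim a' b')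

/-- `tp(ā/B)` splits over `A`. -/
def SplitsOver (B A : Set M) {n : ℕ} (a : Fin n → M) : Prop :=
  ∃ (m : ℕ) (c d : Fin m → M), (∀ i, c i ∈ B) ∧ (∀ i, d i ∈ B) ∧
    EqQFOver L A c d ∧ ¬ EqQFOver L (A ∪ Set.range a) c d

/-- `tp(b̄/B)` is s-isolated (for `b̄ ∈ cl B`). -/
def SIsolated (B : Set M) {n : ℕ} (b : Fin n → M) : Prop :=
  ∃ A₀ : Finset M, ↑A₀ ⊆ B ∧
    ∀ b' : Fin n → M, (∀ i, b' i ∈ P.cl B) →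
      EqQFOver L (↑A₀ : Set M) b' b → EqQFOver L B b' b




/-! ### Auxiliary construction: the model `ℕ × ℕ` with `adj x y ↔ x.1 = y.1` -/

abbrev Mdl : Type := ℕ × ℕ

instance grStruct : Language.graph.Structure Mdl where
  funMap := fun f _ => f.elim
  RelMap := fun r => match r with
    | .adj => fun v => (v 0).1 = (v 1).1

@[simp] lemma relMap_adj (v : Fin 2 → Mdl) :
    Language.Structure.RelMap Language.adj v ↔ (v 0).1 = (v 1).1 := Iff.rfl

lemma term_var {β : Type*} (t : Language.graph.Term β) : ∃ i, t = Language.Term.var i := by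
  cases t with
  | var i => exact ⟨i, rfl⟩
  | func f ts => exact f.elim

/-- The equality pattern and class pattern of a pair of tuples. -/
def Pat {α : Type*} (a b : α → Mdl) : Prop :=
  (∀ i j, a i = a j ↔ b i = b j) ∧ (∀ i j, (a i).1 = (a j).1 ↔ (b i).1 = (b j).1)

lemma eqQF_of_pat {α : Type*} {a b : α → Mdl} (h : Pat a b) :
    EqQF Language.graph a b := by
  intro φ hφ
  induction hφ with
  | falsum => exact Iff.rfl
  | of_isAtomic ha =>
    cases ha with
    | equal t₁ t₂ =>
      obtain ⟨i₁, rfl⟩ := term_var t₁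
      obtain ⟨i₂, rfl⟩ := term_var t₂
      rcases i₁ with i₁ | k
      · rcases i₂ with i₂ | k
        · simpa [Language.Formula.Realize] using h.1 i₁ i₂
        · exact k.elim0
      · exact k.elim0
    | rel R ts =>
      cases R with
      | adj =>
        obtain ⟨i₁, h₁⟩ := term_var (ts 0)
        obtain ⟨i₂, h₂⟩ := term_var (ts 1)
        rcases i₁ with i₁ | k
        · rcases i₂ with i₂ | k
          · simp only [Language.Formula.Realize, Language.BoundedFormula.realize_rel,
              relMap_adj, h₁, h₂, Language.Term.realize_var, Sum.elim_inl]
            simp only [Language.Relations.boundedFormula, Language.BoundedFormula.Realize]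
            simp only [relMap_adj, h₁, h₂, Language.Term.realize_var, Sum.elim_inl]
            exact h.2 i₁ i₂
          · exact k.elim0
        · exact k.elim0
  | imp h1 h2 ih1 ih2 =>
    simp only [Language.Formula.Realize, Language.BoundedFormula.realize_imp] at *
    exact imp_congr ih1 ih2

lemma pat_of_eqQF {α : Type*} {a b : α → Mdl} (h : EqQF Language.graph a b) :
    Pat a b := by
  constructor
  · intro i j
    have := h ((Language.Term.var i).equal (Language.Term.var j))
      ((Language.BoundedFormula.IsAtomic.equal _ _).isQF)
    simpa [Language.Formula.realize_equal] using this
  · intro i j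
    have := h (Language.adj.formula₂ (Language.Term.var i) (Language.Term.var j))
      ((Language.BoundedFormula.IsAtomic.rel _ _).isQF)
    simpa [Language.Formula.realize_rel₂] using this

/-- The closure operator. -/
def clM (A : Set Mdl) : Set Mdl := {y | ∃ x ∈ A, x.1 = y.1}

def PM : Pregeom Mdl where
  cl := clM
  subset_cl := fun A x hx => ⟨x, hx, rfl⟩
  mono := fun A B hAB y ⟨x, hx, he⟩ => ⟨x, hAB hx, he⟩
  cl_idem := fun A => Set.Subset.antisymm
    (fun y ⟨x, ⟨z, hz, hzx⟩, he⟩ => ⟨z, hz, hzx.trans he⟩)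
    (fun y ⟨x, hx, he⟩ => ⟨x, ⟨x, hx, rfl⟩, he⟩)
  finChar := fun A x ⟨z, hz, he⟩ => ⟨{z}, by simpa using hz, ⟨z, by simp, he⟩⟩
  exchange := by
    rintro A a c ⟨x, hx, he⟩ hna
    rcases hx with rfl | hx
    · exact ⟨a, Set.mem_insert _ _, he.symm⟩
    · exact absurd ⟨x, hx, he⟩ hna

lemma pat_extend {α : Type*} {u v : α → Mdl} {x y : Mdl}
    (hp : Pat u v)
    (he : ∀ i, x = u i ↔ y = v i)
    (hc : ∀ i, x.1 = (u i).1 ↔ y.1 = (v i).1) :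
    Pat (Sum.elim u (fun _ : Unit => x)) (Sum.elim v (fun _ : Unit => y)) := by
  constructor
  · rintro (i | i) (j | j)
    · exact hp.1 i j
    · simpa [eq_comm] using he i
    · exact he j
    · simp
  · rintro (i | i) (j | j)
    · exact hp.2 i j
    · simpa [eq_comm] using hc i
    · exact hc j
    · simp


lemma qm1M : QM1 Language.graph Mdl PM := by
  intro n a a' b b' hqf
  have hp := pat_of_eqQF hqf
  constructor
  · rintro ⟨x, ⟨i, rfl⟩, he⟩
    refine ⟨b' i, ⟨i, rfl⟩, ?_⟩
    have := hp.2 i.succ 0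
    simp only [Fin.cons_succ, Fin.cons_zero] at this
    exact this.mp he
  · rintro ⟨x, ⟨i, rfl⟩, he⟩
    refine ⟨b i, ⟨i, rfl⟩, ?_⟩
    have := hp.2 i.succ 0
    simp only [Fin.cons_succ, Fin.cons_zero] at this
    exact this.mpr he

lemma qm3M : QM3 Mdl PM := fun _ => Set.to_countable _

lemma qm4M : QM4 Language.graph Mdl PM := by
  intro ι _ h h' hcl hcl' hqf a a' ha ha'
  have hp := pat_of_eqQF hqf
  have key : ∀ i, a.1 ≠ (h i).1 := by
    intro i hi
    have : a ∈ PM.cl (Set.range h) := ⟨h i, ⟨i, rfl⟩, hi.symm⟩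
    rw [hcl] at this
    exact ha this
  have key' : ∀ i, a'.1 ≠ (h' i).1 := by
    intro i hi
    have : a' ∈ PM.cl (Set.range h') := ⟨h' i, ⟨i, rfl⟩, hi.symm⟩
    rw [hcl'] at this
    exact ha' this
  exact eqQF_of_pat (pat_extend hp
    (fun i => iff_of_false (fun e => ha ⟨i, e.symm⟩) (fun e => ha' ⟨i, e.symm⟩))
    (fun i => iff_of_false (key i) (key' i)))

lemma qm5M : QM5 Language.graph Mdl PM := by
  intro ι _ h h' n b b' hcl hcl' hqf a ha
  have hp := pat_of_eqQF hqf
  by_cases hmem : ∃ k, a = Sum.elim h b k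
  · obtain ⟨k, rfl⟩ := hmem
    exact ⟨Sum.elim h' b' k,
      eqQF_of_pat (pat_extend hp (fun i => hp.1 k i) (fun i => hp.2 k i))⟩
  · push_neg at hmem
    have hah : ∀ i, a ≠ h i := fun i => hmem (Sum.inl i)
    have hab : ∀ j, a ≠ b j := fun j => hmem (Sum.inr j)
    have keyh : ∀ i, a.1 ≠ (h i).1 := by
      intro i hi
      rcases hcl with hc | hc
      · have : a ∈ PM.cl (Set.range h) := ⟨h i, ⟨i, rfl⟩, hi.symm⟩
        rw [hc] at this
        obtain ⟨j, hj⟩ := this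
        exact hah j hj.symm
      · have : h i ∈ Set.range h := ⟨i, rfl⟩
        rw [hc] at this
        exact this
    have hbj : ∃ j, (b j).1 = a.1 := by
      obtain ⟨x, hx, he⟩ := ha
      rcases hx with ⟨i, rfl⟩ | ⟨j, rfl⟩
      · exact absurd he.symm (keyh i)
      · exact ⟨j, he⟩
    obtain ⟨j, hj⟩ := hbj
    classical
    set m := (Finset.univ.sup fun p : Fin n => (b' p).2) + 1 with hm
    refine ⟨((b' j).1, m), eqQF_of_pat (pat_extend hp ?_ ?_)⟩
    · -- equality conditions: both sides false
      have hra' : ∀ p : Fin n, ((b' j).1, m) ≠ b' p := by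
        intro p he
        have h1 : (b' p).2 ≤ Finset.univ.sup fun p : Fin n => (b' p).2 :=
          Finset.le_sup (f := fun p : Fin n => (b' p).2) (Finset.mem_univ p)
        have h2 : ((b' j).1, m).2 = (b' p).2 := congrArg Prod.snd he
        simp only at h2
        omega
      have keyh' : ∀ i, ((b' j).1, m).1 ≠ (h' i).1 := by
        intro i hi
        have : (b j).1 = (h i).1 := (hp.2 (Sum.inr j) (Sum.inl i)).mpr hi
        exact keyh i (hj ▸ this : a.1 = (h i).1)
      rintro (i | p)
      · exact iff_of_false (fun e => hah i e) (fun e => keyh' i (congrArg Prod.fst e))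
      · exact iff_of_false (fun e => hab p e) (fun e => hra' p e)
    · -- class conditions
      have keyh' : ∀ i, ((b' j).1, m).1 ≠ (h' i).1 := by
        intro i hi
        have : (b j).1 = (h i).1 := (hp.2 (Sum.inr j) (Sum.inl i)).mpr hi
        exact keyh i (hj ▸ this : a.1 = (h i).1)
      rintro (i | p)
      · exact iff_of_false (keyh i) (keyh' i)
      · show a.1 = (b p).1 ↔ (b' j).1 = (b' p).1
        rw [← hj]
        exact hp.2 (Sum.inr j) (Sum.inr p)

lemma notSIsolatedM :
    let M₀ : Set Mdl := {p | p.1 = 0 ∧ p.2 ≠ 0}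
    let a : Fin 0 → Mdl := fun i => i.elim0
    let b : Fin 1 → Mdl := fun _ => (0, 0)
    ¬ SIsolated Language.graph Mdl PM (M₀ ∪ Set.range a) b := by
  intro M₀ a b
  rintro ⟨A₀, hA₀sub, H⟩
  have hra : Set.range a = (∅ : Set Mdl) := Set.range_eq_empty _
  have hcM₀ : ∀ x : Mdl, x ∈ M₀ ∪ Set.range a → x ∈ M₀ := by
    intro x hx
    rcases hx with hx | hx
    · exact hx
    · rw [hra] at hx; exact hx.elim
  set k := (A₀.sup Prod.snd) + 1 with hk
  have hk0 : k ≠ 0 := Nat.succ_ne_zero _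
  have hkA : ((0, k) : Mdl) ∉ A₀ := by
    intro hmem
    have := Finset.le_sup (f := Prod.snd) hmem
    simp only at this
    omega
  set b' : Fin 1 → Mdl := fun _ => (0, k) with hb'
  have h1 : ∀ i, b' i ∈ PM.cl (M₀ ∪ Set.range a) :=
    fun _ => ⟨(0, 1), Or.inl ⟨rfl, one_ne_zero⟩, rfl⟩
  have h2 : EqQFOver Language.graph (↑A₀ : Set Mdl) b' b := by
    intro m c hc
    have hcM : ∀ i, c i ∈ M₀ := fun i => hcM₀ _ (hA₀sub (hc i))
    apply eqQF_of_pat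
    constructor
    · rintro (i | i) (j | j)
      · exact iff_of_true rfl rfl
      · refine iff_of_false (fun e => ?_) (fun e => (hcM j).2 (congrArg Prod.snd e).symm)
        have e' : ((0, k) : Mdl) = c j := e
        exact hkA (by rw [e']; exact hc j)
      · refine iff_of_false (fun e => ?_) (fun e => (hcM i).2 (congrArg Prod.snd e))
        have e' : c i = ((0, k) : Mdl) := e
        exact hkA (by rw [← e']; exact hc i)
      · exact Iff.rfl
    · have f1 : ∀ x : Fin 1 ⊕ Fin m, (Sum.elim b' c x).1 = 0 := by
        rintro (i | i)
        · rfl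
        · exact (hcM i).1
      have f2 : ∀ x : Fin 1 ⊕ Fin m, (Sum.elim b c x).1 = 0 := by
        rintro (i | i)
        · rfl
        · exact (hcM i).1
      intro i j
      rw [f1, f1, f2, f2]
  have h3 := H b' h1 h2 1 (fun _ => ((0, k) : Mdl)) (fun _ => Or.inl ⟨rfl, hk0⟩)
  have h4 := h3 ((Language.Term.var (Sum.inl 0)).equal (Language.Term.var (Sum.inr 0)))
    ((Language.BoundedFormula.IsAtomic.equal _ _).isQF)
  rw [Language.Formula.realize_equal, Language.Formula.realize_equal] at h4
  simp only [Language.Term.realize_var, Sum.elim_inl, Sum.elim_inr] at h4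
  exact hk0 (congrArg Prod.snd (h4.mp (by trivial))).symm

/-- in the language of one equivalence relation there is a weakly
quasiminimal pregeometry structure with ℵ₀ classes of size ℵ₀ (witnessed by a bijection
with `ℕ × ℕ` identifying the classes with the fibres of the first coordinate), whose
closure is the union of classes meeting the set, together with an infinite non-closed
`M₀ ⊆ 𝔐` and tuples `ā`, `b̄ ∈ cl(M₀ ā)` such that `tp(b̄/M₀ ∪ ā)` is not s-isolated. -/
theorem s_isolation_fails_over_nonclosed_sets :
    ∃ (M : Type) (_S : FirstOrder.Language.graph.Structure M) (P : Pregeom M)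
      (f : M ≃ ℕ × ℕ),
      (∀ x y : M,
        @FirstOrder.Language.Structure.RelMap FirstOrder.Language.graph M _S 2
          FirstOrder.Language.adj ![x, y] ↔ (f x).1 = (f y).1) ∧
      (∀ A : Set M, P.cl A = {y | ∃ x ∈ A, (f x).1 = (f y).1}) ∧
      @IsWQPS FirstOrder.Language.graph M _S P ∧
      ∃ (M₀ : Set M) (na nb : ℕ) (a : Fin na → M) (b : Fin nb → M),
        M₀.Infinite ∧ P.cl M₀ ≠ M₀ ∧
        (∀ i, b i ∈ P.cl (M₀ ∪ Set.range a)) ∧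
        ¬ @SIsolated FirstOrder.Language.graph M _S P (M₀ ∪ Set.range a) nb b := by
  refine ⟨Mdl, grStruct, PM, Equiv.refl _, fun x y => by simp, fun A => rfl,
    ⟨qm1M, qm3M, qm4M, qm5M⟩,
    {p | p.1 = 0 ∧ p.2 ≠ 0}, 0, 1, fun i => i.elim0, fun _ => (0, 0), ?_, ?_, ?_, notSIsolatedM⟩
  · exact Set.infinite_of_injective_forall_mem (f := fun n : ℕ => ((0, n + 1) : Mdl))
      (fun m n h => by simpa using congrArg Prod.snd h)
      (fun n => ⟨rfl, Nat.succ_ne_zero n⟩)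
  · intro hEq
    have : ((0, 0) : Mdl) ∈ PM.cl {p : Mdl | p.1 = 0 ∧ p.2 ≠ 0} :=
      ⟨(0, 1), ⟨rfl, one_ne_zero⟩, rfl⟩
    rw [hEq] at this
    exact this.2 rfl
  · exact fun i => ⟨(0, 1), Or.inl ⟨rfl, one_ne_zero⟩, rfl⟩



end QM
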